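/- Let ℓ₁, ℓ₂ > 0 be real, α₁, α₂ ∈ ℝ, and k ∈ ℂ with k ≠ 0. There exists a nonzero tuple (a₁, b₁, a₂, b₂, c₁, c₂) ∈ ℂ⁶ satisfying the linear system: a₁ + b₁ = c₁, a₂ + b₂ = c₁, ik·(a₁ − b₁) + ik·(a₂ − b₂) + ik·c₁ = α₁·c₁, a₁e^{ikℓ₁} + b₁e^{−ikℓ₁} = c₂, a₂e^{ikℓ₂} + b₂e^{−ikℓ₂} = c₂, and −ik·(a₁e^{ikℓ₁} − b₁e^{−ikℓ₁}) − ik·(a₂e^{ikℓ₂} − b₂e^{−ikℓ₂}) + ik·c₂ = α₂·c₂, if and only if (α₁ − ik)(α₂ − ik)·sin(kℓ₁)·sin(kℓ₂) − 4k²·sin²(k(ℓ₁+ℓ₂)/2) + k·(α₁ + α₂ − 2ik)·sin(k(ℓ₁+ℓ₂)) = 0. -/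

import Mathlib

open Complex

set_option maxHeartbeats 1600000

/-- Resonance condition for a loop of two edges of lengths `ℓ₁`, `ℓ₂` with one lead at
each of the two vertices and `δ`-couplings of strengths `α₁`, `α₂`: a nontrivial
generalized eigenfunction exists iff
`(α₁-ik)(α₂-ik) sin kℓ₁ sin kℓ₂ - 4k² sin²(k(ℓ₁+ℓ₂)/2) + k(α₁+α₂-2ik) sin k(ℓ₁+ℓ₂) = 0`. -/
theorem stmt_10 (ℓ₁ ℓ₂ : ℝ) (hℓ₁ : 0 < ℓ₁) (hℓ₂ : 0 < ℓ₂) (α₁ α₂ : ℝ) (k : ℂ)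
    (hk : k ≠ 0) :
    (∃ a₁ b₁ a₂ b₂ c₁ c₂ : ℂ,
      (a₁, b₁, a₂, b₂, c₁, c₂) ≠ (0, 0, 0, 0, 0, 0) ∧
      a₁ + b₁ = c₁ ∧
      a₂ + b₂ = c₁ ∧
      Complex.I * k * (a₁ - b₁) + Complex.I * k * (a₂ - b₂) + Complex.I * k * c₁
        = α₁ * c₁ ∧
      a₁ * Complex.exp (Complex.I * k * ℓ₁) + b₁ * Complex.exp (-(Complex.I * k * ℓ₁))
        = c₂ ∧
      a₂ * Complex.exp (Complex.I * k * ℓ₂) + b₂ * Complex.exp (-(Complex.I * k * ℓ₂))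
        = c₂ ∧
      -(Complex.I * k) * (a₁ * Complex.exp (Complex.I * k * ℓ₁)
          - b₁ * Complex.exp (-(Complex.I * k * ℓ₁)))
        - Complex.I * k * (a₂ * Complex.exp (Complex.I * k * ℓ₂)
          - b₂ * Complex.exp (-(Complex.I * k * ℓ₂)))
        + Complex.I * k * c₂ = α₂ * c₂)
    ↔ ((α₁ : ℂ) - Complex.I * k) * ((α₂ : ℂ) - Complex.I * k)
        * Complex.sin (k * ℓ₁) * Complex.sin (k * ℓ₂)
      - 4 * k ^ 2 * (Complex.sin (k * (ℓ₁ + ℓ₂) / 2)) ^ 2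
      + k * ((α₁ : ℂ) + (α₂ : ℂ) - 2 * Complex.I * k)
        * Complex.sin (k * (ℓ₁ + ℓ₂)) = 0 := by
  simp only [Complex.exp_neg]
  set u := Complex.exp (Complex.I * k * (ℓ₁ : ℂ)) with hu
  set v := Complex.exp (Complex.I * k * (ℓ₂ : ℂ)) with hv
  have hu0 : u ≠ 0 := Complex.exp_ne_zero _
  have hv0 : v ≠ 0 := Complex.exp_ne_zero _
  have huv0 : u * v ≠ 0 := mul_ne_zero hu0 hv0
  set M : Matrix (Fin 4) (Fin 4) ℂ :=
    !![1, 1, -1, -1;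
       2 * (Complex.I * k) - α₁, -(α₁ : ℂ), Complex.I * k, -(Complex.I * k);
       u * u * v, v, -(u * v * v), -u;
       -(α₂ : ℂ) * (u * u * v), (2 * (Complex.I * k) - α₂) * v,
         -(Complex.I * k) * (u * v * v), Complex.I * k * u] with hM
  -- sine expansions
  have hs1 : Complex.sin (k * (ℓ₁ : ℂ)) = (u⁻¹ - u) * Complex.I / 2 := by
    rw [Complex.sin, show -(k * (ℓ₁ : ℂ)) * Complex.I = -(Complex.I * k * (ℓ₁ : ℂ)) by ring,
      Complex.exp_neg, show k * (ℓ₁ : ℂ) * Complex.I = Complex.I * k * (ℓ₁ : ℂ) by ring, ← hu]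
  have hs2 : Complex.sin (k * (ℓ₂ : ℂ)) = (v⁻¹ - v) * Complex.I / 2 := by
    rw [Complex.sin, show -(k * (ℓ₂ : ℂ)) * Complex.I = -(Complex.I * k * (ℓ₂ : ℂ)) by ring,
      Complex.exp_neg, show k * (ℓ₂ : ℂ) * Complex.I = Complex.I * k * (ℓ₂ : ℂ) by ring, ← hv]
  have huv : Complex.exp (k * ((ℓ₁ : ℂ) + (ℓ₂ : ℂ)) * Complex.I) = u * v := by
    rw [hu, hv, ← Complex.exp_add]
    congr 1
    ring
  have hs12 : Complex.sin (k * ((ℓ₁ : ℂ) + (ℓ₂ : ℂ))) = ((u * v)⁻¹ - u * v) * Complex.I / 2 := by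
    rw [Complex.sin, show -(k * ((ℓ₁ : ℂ) + (ℓ₂ : ℂ))) * Complex.I
        = -(k * ((ℓ₁ : ℂ) + (ℓ₂ : ℂ)) * Complex.I) by ring, Complex.exp_neg, huv]
  have hw2 : Complex.exp (k * ((ℓ₁ : ℂ) + (ℓ₂ : ℂ)) / 2 * Complex.I)
      * Complex.exp (k * ((ℓ₁ : ℂ) + (ℓ₂ : ℂ)) / 2 * Complex.I) = u * v := by
    rw [← Complex.exp_add, hu, hv, ← Complex.exp_add]
    congr 1
    ring
  have hsq : Complex.sin (k * ((ℓ₁ : ℂ) + (ℓ₂ : ℂ)) / 2) ^ 2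
      = (2 - u * v - (u * v)⁻¹) / 4 := by
    rw [Complex.sin, show -(k * ((ℓ₁ : ℂ) + (ℓ₂ : ℂ)) / 2) * Complex.I
        = -(k * ((ℓ₁ : ℂ) + (ℓ₂ : ℂ)) / 2 * Complex.I) by ring, Complex.exp_neg]
    set w := Complex.exp (k * ((ℓ₁ : ℂ) + (ℓ₂ : ℂ)) / 2 * Complex.I) with hw
    have hw0 : w ≠ 0 := Complex.exp_ne_zero _
    have hww : w * w⁻¹ = 1 := mul_inv_cancel₀ hw0
    have hinv : (u * v)⁻¹ = w⁻¹ * w⁻¹ := by rw [← hw2, mul_inv]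
    rw [hinv, ← hw2]
    linear_combination ((w⁻¹ - w) ^ 2 / 4) * Complex.I_sq + (1 / 2 : ℂ) * hww
  clear_value u v
  -- the three terms of the resonance function, multiplied by `u * v`
  have t1 : Complex.sin (k * (ℓ₁ : ℂ)) * u = (1 - u * u) * Complex.I / 2 := by
    rw [hs1]; field_simp
  have t2 : Complex.sin (k * (ℓ₂ : ℂ)) * v = (1 - v * v) * Complex.I / 2 := by
    rw [hs2]; field_simp
  have t12 : Complex.sin (k * ((ℓ₁ : ℂ) + (ℓ₂ : ℂ))) * (u * v)
      = (1 - (u * v) * (u * v)) * Complex.I / 2 := by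
    rw [hs12]; field_simp
  have tsq : Complex.sin (k * ((ℓ₁ : ℂ) + (ℓ₂ : ℂ)) / 2) ^ 2 * (u * v)
      = (2 * (u * v) - (u * v) * (u * v) - 1) / 4 := by
    rw [hsq]; field_simp
  have EG1 : ((α₁ : ℂ) - Complex.I * k) * ((α₂ : ℂ) - Complex.I * k)
      * Complex.sin (k * (ℓ₁ : ℂ)) * Complex.sin (k * (ℓ₂ : ℂ)) * (u * v)
      = ((α₁ : ℂ) - Complex.I * k) * ((α₂ : ℂ) - Complex.I * k)
        * (-((1 - u * u) * (1 - v * v)) / 4) := by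
    calc ((α₁ : ℂ) - Complex.I * k) * ((α₂ : ℂ) - Complex.I * k)
        * Complex.sin (k * (ℓ₁ : ℂ)) * Complex.sin (k * (ℓ₂ : ℂ)) * (u * v)
        = ((α₁ : ℂ) - Complex.I * k) * ((α₂ : ℂ) - Complex.I * k)
          * (Complex.sin (k * (ℓ₁ : ℂ)) * u) * (Complex.sin (k * (ℓ₂ : ℂ)) * v) := by ring
      _ = ((α₁ : ℂ) - Complex.I * k) * ((α₂ : ℂ) - Complex.I * k)
          * ((1 - u * u) * Complex.I / 2) * ((1 - v * v) * Complex.I / 2) := by rw [t1, t2]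
      _ = ((α₁ : ℂ) - Complex.I * k) * ((α₂ : ℂ) - Complex.I * k)
          * (-((1 - u * u) * (1 - v * v)) / 4) := by
        linear_combination (((α₁ : ℂ) - Complex.I * k) * ((α₂ : ℂ) - Complex.I * k)
          * (1 - u * u) * (1 - v * v) / 4) * Complex.I_sq
  have EG2 : 4 * k ^ 2 * (Complex.sin (k * ((ℓ₁ : ℂ) + (ℓ₂ : ℂ)) / 2)) ^ 2 * (u * v)
      = -(Complex.I * k) ^ 2 * (2 * (u * v) - (u * v) * (u * v) - 1) := by
    calc 4 * k ^ 2 * (Complex.sin (k * ((ℓ₁ : ℂ) + (ℓ₂ : ℂ)) / 2)) ^ 2 * (u * v)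
        = 4 * k ^ 2 * ((Complex.sin (k * ((ℓ₁ : ℂ) + (ℓ₂ : ℂ)) / 2)) ^ 2 * (u * v)) := by
          ring
      _ = 4 * k ^ 2 * ((2 * (u * v) - (u * v) * (u * v) - 1) / 4) := by rw [tsq]
      _ = -(Complex.I * k) ^ 2 * (2 * (u * v) - (u * v) * (u * v) - 1) := by
        linear_combination (k ^ 2 * (2 * (u * v) - (u * v) * (u * v) - 1)) * Complex.I_sq
  have EG3 : k * ((α₁ : ℂ) + (α₂ : ℂ) - 2 * Complex.I * k)
      * Complex.sin (k * ((ℓ₁ : ℂ) + (ℓ₂ : ℂ))) * (u * v)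
      = Complex.I * k * ((α₁ : ℂ) + (α₂ : ℂ) - 2 * (Complex.I * k))
        * ((1 - (u * v) * (u * v)) / 2) := by
    calc k * ((α₁ : ℂ) + (α₂ : ℂ) - 2 * Complex.I * k)
        * Complex.sin (k * ((ℓ₁ : ℂ) + (ℓ₂ : ℂ))) * (u * v)
        = k * ((α₁ : ℂ) + (α₂ : ℂ) - 2 * Complex.I * k)
          * (Complex.sin (k * ((ℓ₁ : ℂ) + (ℓ₂ : ℂ))) * (u * v)) := by ring
      _ = k * ((α₁ : ℂ) + (α₂ : ℂ) - 2 * Complex.I * k)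
          * ((1 - (u * v) * (u * v)) * Complex.I / 2) := by rw [t12]
      _ = Complex.I * k * ((α₁ : ℂ) + (α₂ : ℂ) - 2 * (Complex.I * k))
          * ((1 - (u * v) * (u * v)) / 2) := by ring
  -- the determinant identity (purely polynomial)
  have hdet : M.det = 4 * (u * v)
      * (((α₁ : ℂ) - Complex.I * k) * ((α₂ : ℂ) - Complex.I * k)
            * (-((1 - u * u) * (1 - v * v)) / 4)
        - (-(Complex.I * k) ^ 2 * (2 * (u * v) - (u * v) * (u * v) - 1))
        + Complex.I * k * ((α₁ : ℂ) + (α₂ : ℂ) - 2 * (Complex.I * k))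
            * ((1 - (u * v) * (u * v)) / 2)) := by
    rw [hM]
    simp [Matrix.det_succ_row_zero, Fin.sum_univ_succ, Fin.succAbove,
      show ((2 : Fin 3).castSucc : Fin 4) = 2 from rfl]
    ring
  have hRuv : (((α₁ : ℂ) - Complex.I * k) * ((α₂ : ℂ) - Complex.I * k)
        * Complex.sin (k * (ℓ₁ : ℂ)) * Complex.sin (k * (ℓ₂ : ℂ))
      - 4 * k ^ 2 * (Complex.sin (k * ((ℓ₁ : ℂ) + (ℓ₂ : ℂ)) / 2)) ^ 2
      + k * ((α₁ : ℂ) + (α₂ : ℂ) - 2 * Complex.I * k)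
        * Complex.sin (k * ((ℓ₁ : ℂ) + (ℓ₂ : ℂ)))) * (u * v)
      = ((α₁ : ℂ) - Complex.I * k) * ((α₂ : ℂ) - Complex.I * k)
            * (-((1 - u * u) * (1 - v * v)) / 4)
        - (-(Complex.I * k) ^ 2 * (2 * (u * v) - (u * v) * (u * v) - 1))
        + Complex.I * k * ((α₁ : ℂ) + (α₂ : ℂ) - 2 * (Complex.I * k))
            * ((1 - (u * v) * (u * v)) / 2) := by
    linear_combination EG1 - EG2 + EG3
  constructor
  · rintro ⟨a₁, b₁, a₂, b₂, c₁, c₂, hne, h1, h2, h3, h4, h5, h6⟩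
    have hker : ∃ w, w ≠ 0 ∧ M.mulVec w = 0 := by
      refine ⟨![a₁, b₁, a₂, b₂], ?_, ?_⟩
      · intro h0
        apply hne
        have e0 := congrFun h0 0
        have e1 := congrFun h0 1
        have e2 := congrFun h0 2
        have e3 := congrFun h0 3
        simp only [Matrix.cons_val_zero, Matrix.cons_val_one, Matrix.head_cons,
          Pi.zero_apply] at e0 e1 e2 e3
        have e2' : a₂ = 0 := by simpa using e2
        have e3' : b₂ = 0 := by simpa using e3
        have hc₁ : c₁ = 0 := by rw [← h1, e0, e1]; ring
        have hc₂ : c₂ = 0 := by rw [← h4, e0, e1]; ring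
        simp [e0, e1, e2', e3', hc₁, hc₂]
      · funext j
        fin_cases j <;>
          simp [hM, Matrix.mulVec, dotProduct, Fin.sum_univ_four, Fin.mk_zero,
            Fin.mk_one]
        · linear_combination h1 - h2
        · linear_combination h3 + (Complex.I * k - α₁) * h1
        · linear_combination (norm := (field_simp; ring1)) (u * v) * h4 - (u * v) * h5
        · linear_combination (norm := (field_simp; ring1))
            (u * v) * h6 + (u * v) * (Complex.I * k - α₂) * h4
    have hdet0 := Matrix.exists_mulVec_eq_zero_iff.mp hker
    rw [hdet] at hdet0
    have h40 : (4 : ℂ) * (u * v) ≠ 0 := by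
      exact mul_ne_zero (by norm_num) huv0
    have hG : (((α₁ : ℂ) - Complex.I * k) * ((α₂ : ℂ) - Complex.I * k)
            * (-((1 - u * u) * (1 - v * v)) / 4)
        - (-(Complex.I * k) ^ 2 * (2 * (u * v) - (u * v) * (u * v) - 1))
        + Complex.I * k * ((α₁ : ℂ) + (α₂ : ℂ) - 2 * (Complex.I * k))
            * ((1 - (u * v) * (u * v)) / 2)) = 0 := by
      have := mul_eq_zero.mp (by linear_combination hdet0 :
        ((4 : ℂ) * (u * v)) * (((α₁ : ℂ) - Complex.I * k) * ((α₂ : ℂ) - Complex.I * k)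
            * (-((1 - u * u) * (1 - v * v)) / 4)
        - (-(Complex.I * k) ^ 2 * (2 * (u * v) - (u * v) * (u * v) - 1))
        + Complex.I * k * ((α₁ : ℂ) + (α₂ : ℂ) - 2 * (Complex.I * k))
            * ((1 - (u * v) * (u * v)) / 2)) = 0)
      exact this.resolve_left h40
    rw [← hRuv] at hG
    exact (mul_eq_zero.mp hG).resolve_right huv0
  · intro hR
    have hdet0 : M.det = 0 := by
      rw [hdet, ← hRuv, hR]
      ring
    obtain ⟨w, hw, hMw⟩ := Matrix.exists_mulVec_eq_zero_iff.mpr hdet0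
    have e0 := congrFun hMw 0
    have e1 := congrFun hMw 1
    have e2 := congrFun hMw 2
    have e3 := congrFun hMw 3
    simp [hM, Matrix.mulVec, dotProduct, Fin.sum_univ_four, Fin.mk_zero,
      Fin.mk_one] at e0 e1 e2 e3
    refine ⟨w 0, w 1, w 2, w 3, w 0 + w 1, w 0 * u + w 1 * u⁻¹, ?_, rfl, ?_, ?_, rfl, ?_, ?_⟩
    · intro hcon
      apply hw
      simp only [Prod.mk.injEq] at hcon
      obtain ⟨ha, hb, hc, hd, -, -⟩ := hcon
      funext j
      fin_cases j
      exacts [ha, hb, hc, hd]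
    · linear_combination -e0
    · linear_combination e1
    · linear_combination (norm := (field_simp; ring1)) -((u * v)⁻¹) * e2
    · linear_combination (norm := (field_simp; ring1)) ((u * v)⁻¹) * e3
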